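/- For all nonzero complex numbers z1 and z2, one has |z1 + z2| ≥ (|z1| + |z2|) · |cos((arg(z1) − arg(z2)) / 2)|. -/

import Mathlib

open Complex Real

theorem abs_add_ge_cos_half_arg_sub (z₁ z₂ : ℂ) (h₁ : z₁ ≠ 0) (h₂ : z₂ ≠ 0) :
    ‖z₁ + z₂‖ ≥ (‖z₁‖ + ‖z₂‖) *
      |Real.cos ((Complex.arg z₁ - Complex.arg z₂) / 2)| := by
  set r1 := ‖z₁‖ with hr1def
  set r2 := ‖z₂‖ with hr2def
  have hr1 : 0 < r1 := norm_pos_iff.mpr h₁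
  have hr2 : 0 < r2 := norm_pos_iff.mpr h₂
  have hc1 : Real.cos (Complex.arg z₁) = z₁.re / r1 := Complex.cos_arg h₁
  have hc2 : Real.cos (Complex.arg z₂) = z₂.re / r2 := Complex.cos_arg h₂
  have hs1 : Real.sin (Complex.arg z₁) = z₁.im / r1 := Complex.sin_arg z₁
  have hs2 : Real.sin (Complex.arg z₂) = z₂.im / r2 := Complex.sin_arg z₂
  have hcos : r1 * r2 * Real.cos (Complex.arg z₁ - Complex.arg z₂)
      = z₁.re * z₂.re + z₁.im * z₂.im := by
    rw [Real.cos_sub, hc1, hc2, hs1, hs2]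
    field_simp
  have hsq1 : r1 ^ 2 = z₁.re ^ 2 + z₁.im ^ 2 := by
    rw [hr1def, Complex.sq_norm, Complex.normSq_apply]; ring
  have hsq2 : r2 ^ 2 = z₂.re ^ 2 + z₂.im ^ 2 := by
    rw [hr2def, Complex.sq_norm, Complex.normSq_apply]; ring
  have key : (‖z₁ + z₂‖) ^ 2
      = r1 ^ 2 + r2 ^ 2 + 2 * r1 * r2 * Real.cos (Complex.arg z₁ - Complex.arg z₂) := by
    rw [Complex.sq_norm, Complex.normSq_apply, hsq1, hsq2]
    simp only [Complex.add_re, Complex.add_im]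
    nlinarith [hcos]
  have h2 : ((r1 + r2) * |Real.cos ((Complex.arg z₁ - Complex.arg z₂) / 2)|) ^ 2
      ≤ (‖z₁ + z₂‖) ^ 2 := by
    have h3 : 2 * ((z₁.arg - z₂.arg) / 2) = z₁.arg - z₂.arg := by ring
    rw [key, mul_pow, _root_.sq_abs, Real.cos_sq, h3]
    nlinarith [Real.neg_one_le_cos (Complex.arg z₁ - Complex.arg z₂),
      Real.cos_le_one (Complex.arg z₁ - Complex.arg z₂), sq_nonneg (r1 - r2)]
  have hnn : 0 ≤ (r1 + r2) * |Real.cos ((Complex.arg z₁ - Complex.arg z₂) / 2)| := by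
    positivity
  have := Real.sqrt_le_sqrt h2
  rwa [Real.sqrt_sq hnn, Real.sqrt_sq (norm_nonneg _)] at this
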